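/- Let b, k ≥ 1 and let G be a finite simple graph that contains no set of b+1 vertices which are pairwise (2bk+2)-near-twins. Then for every k-flip G′ of G, the set of vertices whose degree in G′ is at most bk has at most bk elements. -/

import Mathlib

open scoped symmDiff

/-- A `k`-flip of a graph `G`: there exist a coloring `c : V → Fin k` and a symmetric
relation `F` on `Fin k` such that distinct vertices `u, v` are adjacent in `G'` iff
exactly one of `G.Adj u v` and `F (c u) (c v)` holds. -/
def IsKFlip {V : Type*} (k : ℕ) (G G' : SimpleGraph V) : Prop :=
  ∃ (c : V → Fin k) (F : Fin k → Fin k → Prop), Symmetric F ∧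
    ∀ u v : V, u ≠ v → (G'.Adj u v ↔ Xor' (G.Adj u v) (F (c u) (c v)))

/-- If a finite graph `G` contains no set of `b + 1` vertices that are pairwise
`(2bk + 2)`-near-twins, then for every `k`-flip `G'` of `G` the set of vertices of
degree at most `bk` in `G'` has at most `bk` elements. -/
theorem stmt0 {V : Type*} [Fintype V] (b k : ℕ) (hb : 1 ≤ b) (hk : 1 ≤ k)
    (G : SimpleGraph V)
    (hG : ¬ ∃ S : Set V, S.ncard = b + 1 ∧
      S.Pairwise fun u v => ((G.neighborSet u) ∆ (G.neighborSet v)).ncard ≤ 2 * b * k + 2)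
    (G' : SimpleGraph V) (hflip : IsKFlip k G G') :
    {v : V | (G'.neighborSet v).ncard ≤ b * k}.ncard ≤ b * k := by
  classical
  obtain ⟨c, F, hFsymm, hF⟩ := hflip
  by_contra hlt
  push_neg at hlt
  set L : Set V := {v : V | (G'.neighborSet v).ncard ≤ b * k} with hL
  have hLfin : L.Finite := Set.toFinite _
  have hcard : (Finset.univ : Finset (Fin k)).card * b < hLfin.toFinset.card := by
    rw [Set.ncard_eq_toFinset_card L hLfin] at hlt
    simpa [Finset.card_univ, Nat.mul_comm] using hlt
  obtain ⟨y, -, hy⟩ := Finset.exists_lt_card_fiber_of_mul_lt_card_of_maps_to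
    (fun a _ => Finset.mem_univ (c a)) hcard
  obtain ⟨S, hS_sub, hScard⟩ := Finset.exists_subset_card_eq (Nat.succ_le_of_lt hy)
  apply hG
  refine ⟨(↑S : Set V), by rw [Set.ncard_coe_finset, hScard], ?_⟩
  intro u hu v hv huv
  simp only [Finset.coe_sort_coe, Set.mem_setOf_eq, Finset.mem_coe] at hu hv
  have hu' := hS_sub hu
  have hv' := hS_sub hv
  simp only [Finset.mem_filter, Set.Finite.mem_toFinset] at hu' hv'
  obtain ⟨huL, hcu⟩ := hu'
  obtain ⟨hvL, hcv⟩ := hv'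
  have hcuv : c u = c v := hcu.trans hcv.symm
  have hsub : (G.neighborSet u) ∆ (G.neighborSet v) ⊆
      ((G'.neighborSet u) ∆ (G'.neighborSet v)) ∪ {u, v} := by
    intro w hw
    by_cases hwu : w = u
    · right; simp [hwu]
    by_cases hwv : w = v
    · right; simp [hwv]
    left
    rw [Set.mem_symmDiff] at hw ⊢
    simp only [SimpleGraph.mem_neighborSet] at hw ⊢
    have h1 := hF u w (fun h => hwu h.symm)
    have h2 := hF v w (fun h => hwv h.symm)
    rw [hcuv] at h1
    unfold Xor' Xor at h1 h2
    tauto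
  have h1 : ((G.neighborSet u) ∆ (G.neighborSet v)).ncard ≤
      (((G'.neighborSet u) ∆ (G'.neighborSet v)) ∪ {u, v}).ncard :=
    Set.ncard_le_ncard hsub (Set.toFinite _)
  have h2 : (((G'.neighborSet u) ∆ (G'.neighborSet v)) ∪ {u, v}).ncard ≤
      ((G'.neighborSet u) ∆ (G'.neighborSet v)).ncard + 2 := by
    refine (Set.ncard_union_le _ _).trans ?_
    have : ({u, v} : Set V).ncard ≤ 2 := by
      refine (Set.ncard_insert_le _ _).trans ?_
      simp
    omega
  have h3 : ((G'.neighborSet u) ∆ (G'.neighborSet v)).ncard ≤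
      (G'.neighborSet u).ncard + (G'.neighborSet v).ncard := by
    refine (Set.ncard_le_ncard (symmDiff_le_sup : _ ∆ _ ≤ _ ∪ _) (Set.toFinite _)).trans ?_
    exact Set.ncard_union_le _ _
  have hdu : (G'.neighborSet u).ncard ≤ b * k := huL
  have hdv : (G'.neighborSet v).ncard ≤ b * k := hvL
  have : 2 * b * k + 2 = b * k + b * k + 2 := by ring
  omega
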